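/- Let d ≥ 1 and let ρ be a Hermitian d×d complex matrix. Set A = ρ − ρᵀ and let ‖A‖_tr = tr(√(AᴴA)) denote its trace norm and ‖A‖_F its Frobenius norm. Then ‖A‖_F ≤ ‖A‖_tr, and equality ‖A‖_tr = ‖A‖_F holds if and only if ρᵀ = ρ (equivalently A = 0). -/

import Mathlib

open Matrix
open scoped ComplexOrder

/-- The trace norm `‖A‖_tr = tr √(Aᴴ A)` of a complex matrix (as a real number). -/
noncomputable def traceNorm {n : Type*} [Fintype n] [DecidableEq n] (A : Matrix n n ℂ) : ℝ :=
  (((Matrix.posSemidef_conjTranspose_mul_self A).1.eigenvectorUnitary.1 *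
    diagonal (((↑) : ℝ → ℂ) ∘ Real.sqrt ∘ (Matrix.posSemidef_conjTranspose_mul_self A).1.eigenvalues) *
    (star (Matrix.posSemidef_conjTranspose_mul_self A).1.eigenvectorUnitary : Matrix n n ℂ)).trace).re

/-- The Frobenius norm `‖A‖_F = √(tr(Aᴴ A))` of a complex matrix (as a real number). -/
noncomputable def froNorm {n : Type*} [Fintype n] (A : Matrix n n ℂ) : ℝ :=
  Real.sqrt (((Aᴴ * A).trace).re)

section aux

lemma max_add_max_neg (a : ℝ) : max a 0 + max (-a) 0 = |a| := by
  rcases le_total 0 a with h | h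
  · rw [max_eq_left h, max_eq_right (neg_nonpos.mpr h), abs_of_nonneg h, add_zero]
  · rw [max_eq_right h, max_eq_left (neg_nonneg.mpr h), abs_of_nonpos h, zero_add]

lemma max_sub_max_neg (a : ℝ) : max a 0 - max (-a) 0 = a := by
  rcases le_total 0 a with h | h
  · rw [max_eq_left h, max_eq_right (neg_nonpos.mpr h), sub_zero]
  · rw [max_eq_right h, max_eq_left (neg_nonneg.mpr h), zero_sub, neg_neg]

lemma sq_eq_max_sq_add_max_neg_sq (a : ℝ) : a ^ 2 = max a 0 ^ 2 + max (-a) 0 ^ 2 := by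
  rcases le_total 0 a with h | h
  · rw [max_eq_left h, max_eq_right (neg_nonpos.mpr h)]; ring
  · rw [max_eq_right h, max_eq_left (neg_nonneg.mpr h)]; ring

variable {n : Type*} [Fintype n] [DecidableEq n]

lemma traceNorm_eq_sum_abs (A : Matrix n n ℂ) (hAh : A.IsHermitian) :
    traceNorm A = ∑ i, |hAh.eigenvalues i| := by
  set U : Matrix n n ℂ := (hAh.eigenvectorUnitary : Matrix n n ℂ) with hUdef
  set lam := hAh.eigenvalues
  set D : Matrix n n ℂ := diagonal ((↑) ∘ lam)
  have hU : star U * U = 1 := (Matrix.mem_unitaryGroup_iff').mp hAh.eigenvectorUnitary.2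
  have hspec : A = U * D * star U := hAh.spectral_theorem
  set C : Matrix n n ℂ := U * diagonal ((↑) ∘ fun i => |lam i|) * star U with hCdef
  have hCpsd : C.PosSemidef := by
    have hd : (diagonal ((↑) ∘ fun i => |lam i|) : Matrix n n ℂ).PosSemidef :=
      posSemidef_diagonal_iff.mpr fun i => by
        simpa using Complex.ofReal_nonneg.mpr (abs_nonneg (lam i))
    rw [hCdef, Matrix.star_eq_conjTranspose]; exact hd.mul_mul_conjTranspose_same U
  have hC2 : C ^ 2 = Aᴴ * A := by
    rw [hAh.eq, hspec, hCdef, pow_two]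
    rw [show (U * diagonal ((↑) ∘ fun i => |lam i|) * star U) *
        (U * diagonal ((↑) ∘ fun i => |lam i|) * star U)
        = U * (diagonal ((↑) ∘ fun i => |lam i|) * (star U * U) *
          diagonal ((↑) ∘ fun i => |lam i|)) * star U by noncomm_ring,
      show (U * D * star U) * (U * D * star U) = U * (D * (star U * U) * D) * star U by
        noncomm_ring, hU]
    simp only [Matrix.mul_one]
    congr 2
    rw [diagonal_mul_diagonal, diagonal_mul_diagonal]
    congr 1
    ext i
    simp [Function.comp, ← Complex.ofReal_mul, abs_mul_abs_self]
  have hsqrt : C = (Matrix.posSemidef_conjTranspose_mul_self A).1.eigenvectorUnitary.1 *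
      diagonal (((↑) : ℝ → ℂ) ∘ Real.sqrt ∘ (Matrix.posSemidef_conjTranspose_mul_self A).1.eigenvalues) *
      (star (Matrix.posSemidef_conjTranspose_mul_self A).1.eigenvectorUnitary : Matrix n n ℂ) := by
    have e1 : (Matrix.posSemidef_conjTranspose_mul_self A).1.eigenvectorUnitary.1 *
        diagonal (((↑) : ℝ → ℂ) ∘ Real.sqrt ∘ (Matrix.posSemidef_conjTranspose_mul_self A).1.eigenvalues) *
        (star (Matrix.posSemidef_conjTranspose_mul_self A).1.eigenvectorUnitary : Matrix n n ℂ)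
        = cfc Real.sqrt (Aᴴ * A) := by
      rw [Matrix.IsHermitian.cfc_eq (Matrix.posSemidef_conjTranspose_mul_self A).1]; rfl
    have e2 : C = cfc (fun x : ℝ => |x|) A := by
      rw [Matrix.IsHermitian.cfc_eq hAh]; rfl
    have e3 : A * A = cfc (fun x : ℝ => x ^ 2) A := by
      rw [cfc_pow_id (R := ℝ) A 2 hAh.isSelfAdjoint, pow_two]
    rw [e1, e2, hAh.eq, e3, ← cfc_comp' Real.sqrt (fun x : ℝ => x ^ 2) A (ha := hAh.isSelfAdjoint)]
    congr 1
    funext x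
    exact (Real.sqrt_sq_eq_abs x).symm
  rw [traceNorm, ← hsqrt, hCdef, Matrix.trace_mul_cycle, hU, Matrix.one_mul,
    Matrix.trace_diagonal]
  simp [Complex.ofReal_sum]

lemma fro_sq_eq (A : Matrix n n ℂ) (hAh : A.IsHermitian) :
    ((Aᴴ * A).trace).re = ∑ i, (hAh.eigenvalues i) ^ 2 := by
  set U : Matrix n n ℂ := (hAh.eigenvectorUnitary : Matrix n n ℂ) with hUdef
  set lam := hAh.eigenvalues
  set D : Matrix n n ℂ := diagonal ((↑) ∘ lam)
  have hU : star U * U = 1 := (Matrix.mem_unitaryGroup_iff').mp hAh.eigenvectorUnitary.2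
  have hspec : A = U * D * star U := hAh.spectral_theorem
  have hAA : Aᴴ * A = U * (D * D) * star U := by
    rw [hAh.eq]
    conv_lhs => rw [hspec]
    rw [show (U * D * star U) * (U * D * star U) = U * (D * (star U * U) * D) * star U by
      noncomm_ring, hU]
    noncomm_ring
  rw [hAA, Matrix.trace_mul_cycle, hU, Matrix.one_mul]
  simp [D, diagonal_mul_diagonal, Matrix.trace_diagonal, ← Complex.ofReal_mul, sq,
    ← Complex.ofReal_sum]

lemma eigs_zero_imp_zero (A : Matrix n n ℂ) (hAh : A.IsHermitian)
    (h : ∀ i, hAh.eigenvalues i = 0) : A = 0 := by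
  have hspec : A = (hAh.eigenvectorUnitary : Matrix n n ℂ) *
      diagonal ((↑) ∘ hAh.eigenvalues) * star (hAh.eigenvectorUnitary : Matrix n n ℂ) :=
    hAh.spectral_theorem
  rw [hspec]
  have hz : ((↑) ∘ hAh.eigenvalues : n → ℂ) = fun _ => 0 := by
    ext i; simp [h i]
  rw [hz, diagonal_zero, Matrix.mul_zero, Matrix.zero_mul]

end aux

/-- for Hermitian `ρ` and `A = ρ − ρᵀ`, one has `‖A‖_F ≤ ‖A‖_tr`, with
equality iff `ρᵀ = ρ` (equivalently `A = 0`). -/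
theorem stmt_10 (d : ℕ) (hd : 1 ≤ d)
    (ρ : Matrix (Fin d) (Fin d) ℂ) (hρ : ρ.IsHermitian)
    (A : Matrix (Fin d) (Fin d) ℂ) (hA : A = ρ - ρᵀ) :
    froNorm A ≤ traceNorm A ∧
      (traceNorm A = froNorm A ↔ ρᵀ = ρ) ∧
      (ρᵀ = ρ ↔ A = 0) := by
  have hAh : A.IsHermitian := by
    have h1 : ρᴴ = ρ := hρ.eq
    ext i j
    have h2 : ∀ a b, (ρᴴ : Matrix (Fin d) (Fin d) ℂ) a b = ρ a b := fun a b => by rw [h1]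
    simp only [hA, Matrix.conjTranspose_apply, Matrix.sub_apply, Matrix.transpose_apply, star_sub]
    have ha := h2 i j
    have hb := h2 j i
    simp only [Matrix.conjTranspose_apply] at ha hb
    rw [ha, hb]
  have hA0 : ρᵀ = ρ ↔ A = 0 := by
    rw [hA, sub_eq_zero, eq_comm]
  have htrA : A.trace = 0 := by
    rw [hA, Matrix.trace_sub, Matrix.trace_transpose, sub_self]
  set lam := hAh.eigenvalues with hlam
  have hsum0 : ∑ i, lam i = 0 := by
    have hU : star (hAh.eigenvectorUnitary : Matrix (Fin d) (Fin d) ℂ) *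
        (hAh.eigenvectorUnitary : Matrix (Fin d) (Fin d) ℂ) = 1 :=
      (Matrix.mem_unitaryGroup_iff').mp hAh.eigenvectorUnitary.2
    have hc : A.trace = ((∑ i, lam i : ℝ) : ℂ) := by
      conv_lhs => rw [hAh.spectral_theorem]
      rw [Unitary.conjStarAlgAut_apply, Matrix.trace_mul_cycle, hU, Matrix.one_mul, Matrix.trace_diagonal]
      simp [Complex.ofReal_sum, hlam]
    rw [htrA] at hc
    exact_mod_cast hc.symm
  have htn : traceNorm A = ∑ i, |lam i| := traceNorm_eq_sum_abs A hAh
  have hfn2 : ((Aᴴ * A).trace).re = ∑ i, (lam i) ^ 2 := fro_sq_eq A hAh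
  have hfn : froNorm A = Real.sqrt (∑ i, (lam i) ^ 2) := by
    rw [froNorm, hfn2]
  have hS2T2 : ∑ i, (lam i) ^ 2 ≤ (∑ i, |lam i|) ^ 2 := by
    calc ∑ i, (lam i) ^ 2 = ∑ i, |lam i| ^ 2 := by simp [sq_abs]
    _ ≤ (∑ i, |lam i|) ^ 2 :=
        Finset.sum_sq_le_sq_sum_of_nonneg (fun i _ => abs_nonneg _)
  have hTnn : 0 ≤ ∑ i, |lam i| := Finset.sum_nonneg fun i _ => abs_nonneg _
  have hle : froNorm A ≤ traceNorm A := by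
    rw [hfn, htn]
    calc Real.sqrt (∑ i, (lam i) ^ 2) ≤ Real.sqrt ((∑ i, |lam i|) ^ 2) :=
          Real.sqrt_le_sqrt hS2T2
    _ = ∑ i, |lam i| := Real.sqrt_sq hTnn
  refine ⟨hle, ?_, hA0⟩
  constructor
  · intro heq
    have hPN : (∑ i, max (lam i) 0) + ∑ i, max (-lam i) 0 = ∑ i, |lam i| := by
      rw [← Finset.sum_add_distrib]
      exact Finset.sum_congr rfl fun i _ => max_add_max_neg (lam i)
    have hPN' : (∑ i, max (lam i) 0) - ∑ i, max (-lam i) 0 = 0 := by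
      calc (∑ i, max (lam i) 0) - ∑ i, max (-lam i) 0 = ∑ i, lam i := by
            rw [← Finset.sum_sub_distrib]
            exact Finset.sum_congr rfl fun i _ => max_sub_max_neg (lam i)
      _ = 0 := hsum0
    have hsplit : ∑ i, (lam i) ^ 2 = (∑ i, max (lam i) 0 ^ 2) + ∑ i, max (-lam i) 0 ^ 2 := by
      rw [← Finset.sum_add_distrib]
      exact Finset.sum_congr rfl fun i _ => sq_eq_max_sq_add_max_neg_sq (lam i)
    have h1 : ∑ i, max (lam i) 0 ^ 2 ≤ (∑ i, max (lam i) 0) ^ 2 :=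
      Finset.sum_sq_le_sq_sum_of_nonneg (fun i _ => le_max_right _ _)
    have h2 : ∑ i, max (-lam i) 0 ^ 2 ≤ (∑ i, max (-lam i) 0) ^ 2 :=
      Finset.sum_sq_le_sq_sum_of_nonneg (fun i _ => le_max_right _ _)
    have hTsq : (∑ i, |lam i|) ^ 2 = ∑ i, (lam i) ^ 2 := by
      have hx : Real.sqrt (∑ i, (lam i) ^ 2) = ∑ i, |lam i| := by
        rw [← hfn, ← heq, htn]
      rw [← hx, Real.sq_sqrt]
      positivity
    have hT0 : ∑ i, |lam i| = 0 := by nlinarith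
    have hlam0 : ∀ i, lam i = 0 := fun i =>
      abs_eq_zero.mp <|
        (Finset.sum_eq_zero_iff_of_nonneg (fun j _ => abs_nonneg (lam j))).mp hT0 i
          (Finset.mem_univ i)
    exact hA0.mpr (eigs_zero_imp_zero A hAh hlam0)
  · intro h
    have hAzero : A = 0 := hA0.mp h
    have hlam0 : ∀ i, lam i = 0 := by
      intro i
      have h0 : (0 : ℝ) = ∑ i, (lam i) ^ 2 := by
        rw [← hfn2, hAzero]; simp
      have := (Finset.sum_eq_zero_iff_of_nonneg (fun j _ => sq_nonneg (lam j))).mp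
        h0.symm i (Finset.mem_univ i)
      exact pow_eq_zero_iff (by norm_num) |>.mp this
    rw [htn, hfn]
    simp [hlam0]
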